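/- arXiv:0909.0767 — 4 statements merged into one kernel-verified Lean document; each statement's English description precedes it below -/
import Mathlib

section
/- Let b : U → ℝ and t₂ : U → ℝ be differentiable, and set b₁ = ∂₁b = −f_x⁻¹ ∂b/∂x. At every point p ∈ U: the equation ∂₂t₂ − b·∂₁t₂ − t₂·(b₁ − (b−1)H) = 0 holds at p if and only if ∂(t₂·b·f_y)/∂x = ∂(t₂·f_x)/∂y at p (i.e., the 1-form t₂ω₄ is closed at p, where ω₄ = −(ω₁ + bω₂) = f_x dx + b f_y dy). -/
open Set

/-- Partial derivative with respect to the first variable. -/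
noncomputable def pdx (g : ℝ × ℝ → ℝ) (p : ℝ × ℝ) : ℝ :=
  deriv (fun x => g (x, p.2)) p.1

/-- Partial derivative with respect to the second variable. -/
noncomputable def pdy (g : ℝ × ℝ → ℝ) (p : ℝ × ℝ) : ℝ :=
  deriv (fun y => g (p.1, y)) p.2

/-- The web function `H = f_{xy} / (f_x f_y)`. -/
noncomputable def Hf (f : ℝ × ℝ → ℝ) (p : ℝ × ℝ) : ℝ :=
  pdy (pdx f) p / (pdx f p * pdy f p)

section Aux

lemma lineX_hasDerivAt (p : ℝ × ℝ) :
    HasDerivAt (fun x : ℝ => ((x, p.2) : ℝ × ℝ)) ((1 : ℝ), (0 : ℝ)) p.1 :=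
  (hasDerivAt_id p.1).prodMk (hasDerivAt_const _ _)

lemma lineY_hasDerivAt (p : ℝ × ℝ) :
    HasDerivAt (fun y : ℝ => ((p.1, y) : ℝ × ℝ)) ((0 : ℝ), (1 : ℝ)) p.2 :=
  (hasDerivAt_const _ _).prodMk (hasDerivAt_id p.2)

lemma pdx_eq_fderiv {g : ℝ × ℝ → ℝ} {p : ℝ × ℝ} (hg : DifferentiableAt ℝ g p) :
    pdx g p = fderiv ℝ g p (1, 0) :=
  (hg.hasFDerivAt.comp_hasDerivAt p.1 (lineX_hasDerivAt p)).deriv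

lemma pdy_eq_fderiv {g : ℝ × ℝ → ℝ} {p : ℝ × ℝ} (hg : DifferentiableAt ℝ g p) :
    pdy g p = fderiv ℝ g p (0, 1) :=
  (hg.hasFDerivAt.comp_hasDerivAt p.2 (lineY_hasDerivAt p)).deriv

lemma pdx_congr {g h : ℝ × ℝ → ℝ} {p : ℝ × ℝ} (he : g =ᶠ[nhds p] h) :
    pdx g p = pdx h p := by
  apply Filter.EventuallyEq.deriv_eq
  have ht : Filter.Tendsto (fun x : ℝ => ((x, p.2) : ℝ × ℝ)) (nhds p.1) (nhds p) :=
    ((continuous_id.prodMk continuous_const).tendsto p.1)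
  exact he.comp_tendsto ht

lemma pdy_congr {g h : ℝ × ℝ → ℝ} {p : ℝ × ℝ} (he : g =ᶠ[nhds p] h) :
    pdy g p = pdy h p := by
  apply Filter.EventuallyEq.deriv_eq
  have ht : Filter.Tendsto (fun y : ℝ => ((p.1, y) : ℝ × ℝ)) (nhds p.2) (nhds p) :=
    ((continuous_const.prodMk continuous_id).tendsto p.2)
  exact he.comp_tendsto ht

lemma pdx_mul {g h : ℝ × ℝ → ℝ} {p : ℝ × ℝ}
    (hg : DifferentiableAt ℝ g p) (hh : DifferentiableAt ℝ h p) :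
    pdx (fun q => g q * h q) p = pdx g p * h p + g p * pdx h p := by
  have hl : DifferentiableAt ℝ (fun x : ℝ => ((x, p.2) : ℝ × ℝ)) p.1 :=
    (lineX_hasDerivAt p).differentiableAt
  exact deriv_mul (hg.comp p.1 hl) (hh.comp p.1 hl)

lemma pdy_mul {g h : ℝ × ℝ → ℝ} {p : ℝ × ℝ}
    (hg : DifferentiableAt ℝ g p) (hh : DifferentiableAt ℝ h p) :
    pdy (fun q => g q * h q) p = pdy g p * h p + g p * pdy h p := by
  have hl : DifferentiableAt ℝ (fun y : ℝ => ((p.1, y) : ℝ × ℝ)) p.2 :=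
    (lineY_hasDerivAt p).differentiableAt
  exact deriv_mul (hg.comp p.2 hl) (hh.comp p.2 hl)

lemma samuelson_alg (A B C T Tx Ty bp bx : ℝ) (hA : A ≠ 0) (hB : B ≠ 0) :
    (-B⁻¹ * Ty - bp * (-A⁻¹ * Tx) - T * ((-A⁻¹ * bx) - (bp - 1) * (C / (A * B))) = 0) ↔
      ((Tx * bp + T * bx) * B + T * bp * C = Ty * A + T * C) := by
  have key : -B⁻¹ * Ty - bp * (-A⁻¹ * Tx) - T * ((-A⁻¹ * bx) - (bp - 1) * (C / (A * B)))
      = (A * B)⁻¹ * (((Tx * bp + T * bx) * B + T * bp * C) - (Ty * A + T * C)) := by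
    field_simp
    ring
  rw [key, mul_eq_zero]
  constructor
  · intro h
    rcases h with h | h
    · exact absurd h (by simp [hA, hB])
    · exact sub_eq_zero.mp h
  · intro h
    exact Or.inr (by rw [h, sub_self])

end Aux

/-- For differentiable `b` and `t₂`, with `b₁ = ∂₁b = -f_x⁻¹ ∂b/∂x`,
the Samuelson equation `∂₂t₂ - b·∂₁t₂ - t₂·(b₁ - (b-1)H) = 0` holds at a point iff
`∂(t₂ b f_y)/∂x = ∂(t₂ f_x)/∂y` there, i.e. iff the 1-form
`t₂ω₄ = t₂·(f_x dx + b f_y dy)` is closed at the point. -/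
theorem samuelson_closedness_t2
    (I J : Set ℝ) (hI : IsOpen I) (hJ : IsOpen J)
    (hIc : I.OrdConnected) (hJc : J.OrdConnected)
    (f : ℝ × ℝ → ℝ) (hf : ContDiffOn ℝ (⊤ : ℕ∞) f (I ×ˢ J))
    (hfx : ∀ p ∈ I ×ˢ J, pdx f p ≠ 0) (hfy : ∀ p ∈ I ×ˢ J, pdy f p ≠ 0)
    (b t₂ : ℝ × ℝ → ℝ)
    (hb : DifferentiableOn ℝ b (I ×ˢ J)) (ht₂ : DifferentiableOn ℝ t₂ (I ×ˢ J)) :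
    ∀ p ∈ I ×ˢ J,
      (-(pdy f p)⁻¹ * pdy t₂ p - b p * (-(pdx f p)⁻¹ * pdx t₂ p)
          - t₂ p * ((-(pdx f p)⁻¹ * pdx b p) - (b p - 1) * Hf f p) = 0) ↔
        pdx (fun q => t₂ q * b q * pdy f q) p = pdy (fun q => t₂ q * pdx f q) p := by
  intro p hp
  have hU : IsOpen (I ×ˢ J) := hI.prod hJ
  have hmem : (I ×ˢ J) ∈ nhds p := hU.mem_nhds hp
  have hfd : ∀ᶠ q in nhds p, DifferentiableAt ℝ f q :=
    Filter.eventually_of_mem hmem fun q hq =>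
      (hf.differentiableOn (by simp)).differentiableAt (hU.mem_nhds hq)
  set F := fderiv ℝ f with hF
  have hfC : ContDiffAt ℝ (⊤ : ℕ∞) f p := hf.contDiffAt hmem
  have hF1 : ContDiffAt ℝ 1 F p := hfC.fderiv_right (by norm_cast)
  have hFd : DifferentiableAt ℝ F p := hF1.differentiableAt one_ne_zero
  set F'' := fderiv ℝ F p with hF''def
  have hF'' : HasFDerivAt F F'' p := hFd.hasFDerivAt
  have hsymm : ∀ v w : ℝ × ℝ, F'' v w = F'' w v := fun v w =>
    second_derivative_symmetric_of_eventually (hfd.mono fun q hq => hq.hasFDerivAt) hF'' v w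
  set g₁ : ℝ × ℝ → ℝ := fun q => F q (1, 0) with hg₁def
  set g₂ : ℝ × ℝ → ℝ := fun q => F q (0, 1) with hg₂def
  have he1 : pdx f =ᶠ[nhds p] g₁ := hfd.mono fun q hq => pdx_eq_fderiv hq
  have he2 : pdy f =ᶠ[nhds p] g₂ := hfd.mono fun q hq => pdy_eq_fderiv hq
  have hg1d : DifferentiableAt ℝ g₁ p :=
    (ContinuousLinearMap.apply ℝ ℝ ((1 : ℝ), (0 : ℝ))).differentiableAt.comp p hFd
  have hg2d : DifferentiableAt ℝ g₂ p :=
    (ContinuousLinearMap.apply ℝ ℝ ((0 : ℝ), (1 : ℝ))).differentiableAt.comp p hFd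
  have hg1f : HasFDerivAt g₁
      ((ContinuousLinearMap.apply ℝ ℝ ((1 : ℝ), (0 : ℝ))).comp F'') p :=
    (ContinuousLinearMap.apply ℝ ℝ ((1 : ℝ), (0 : ℝ))).hasFDerivAt.comp p hF''
  have hg2f : HasFDerivAt g₂
      ((ContinuousLinearMap.apply ℝ ℝ ((0 : ℝ), (1 : ℝ))).comp F'') p :=
    (ContinuousLinearMap.apply ℝ ℝ ((0 : ℝ), (1 : ℝ))).hasFDerivAt.comp p hF''
  set A := pdx f p with hA
  set B := pdy f p with hB
  set C := F'' (0, 1) (1, 0) with hC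
  have hfdp : DifferentiableAt ℝ f p := hfd.self_of_nhds
  have hg1p : g₁ p = A := (pdx_eq_fderiv hfdp).symm
  have hg2p : g₂ p = B := (pdy_eq_fderiv hfdp).symm
  have hpy_g1 : pdy g₁ p = C := by
    rw [pdy_eq_fderiv hg1d, hg1f.fderiv]; rfl
  have hpx_g2 : pdx g₂ p = C := by
    rw [pdx_eq_fderiv hg2d, hg2f.fderiv]
    exact hsymm (1, 0) (0, 1)
  have hCxy : pdy (pdx f) p = C := by rw [pdy_congr he1]; exact hpy_g1
  have hHf : Hf f p = C / (A * B) := by unfold Hf; rw [hCxy]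
  have hbp : DifferentiableAt ℝ b p := hb.differentiableAt hmem
  have ht2p : DifferentiableAt ℝ t₂ p := ht₂.differentiableAt hmem
  -- key2 : pdy (t₂ * pdx f)
  have key2 : pdy (fun q => t₂ q * pdx f q) p = pdy t₂ p * A + t₂ p * C := by
    have hcong : (fun q => t₂ q * pdx f q) =ᶠ[nhds p] fun q => t₂ q * g₁ q :=
      he1.mono fun q hq => by simp [hq]
    rw [pdy_congr hcong, pdy_mul ht2p hg1d, hg1p, hpy_g1]
  -- key1 : pdx (t₂ * b * pdy f)
  have key1 : pdx (fun q => t₂ q * b q * pdy f q) p =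
      (pdx t₂ p * b p + t₂ p * pdx b p) * B + t₂ p * b p * C := by
    have hcong : (fun q => t₂ q * b q * pdy f q) =ᶠ[nhds p] fun q => (t₂ q * b q) * g₂ q :=
      he2.mono fun q hq => by simp [hq]
    rw [pdx_congr hcong, pdx_mul (g := fun q => t₂ q * b q) (ht2p.mul hbp) hg2d, pdx_mul ht2p hbp, hg2p, hpx_g2]
  have hA0 : A ≠ 0 := hfx p hp
  have hB0 : B ≠ 0 := hfy p hp
  rw [key1, key2, hHf]
  exact samuelson_alg A B C (t₂ p) (pdx t₂ p) (pdy t₂ p) (b p) (pdx b p) hA0 hB0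
end

section
/- Let σ₁ : U → ℝ be differentiable. Then ∂₂σ₁ = H holds at every point of U if and only if there exists a differentiable function s₁ : I → ℝ such that σ₁(x, y) = −log|f_x(x, y)| + s₁(x) for all (x, y) ∈ U. Symmetrically, a differentiable σ₂ : U → ℝ satisfies ∂₁σ₂ = H on U if and only if σ₂(x, y) = −log|f_y(x, y)| + s₂(y) for some differentiable s₂ : J → ℝ. -/
open Set Filter Topology

lemma hasDerivAt_slice_x {g : ℝ × ℝ → ℝ} {p : ℝ × ℝ} (h : DifferentiableAt ℝ g p) :
    HasDerivAt (fun x => g (x, p.2)) (fderiv ℝ g p (1, 0)) p.1 := by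
  have h1 : HasDerivAt (fun x : ℝ => (x, p.2)) ((1 : ℝ), (0 : ℝ)) p.1 :=
    (hasDerivAt_id p.1).prodMk (hasDerivAt_const p.1 p.2)
  exact h.hasFDerivAt.comp_hasDerivAt p.1 h1

lemma hasDerivAt_slice_y {g : ℝ × ℝ → ℝ} {p : ℝ × ℝ} (h : DifferentiableAt ℝ g p) :
    HasDerivAt (fun y => g (p.1, y)) (fderiv ℝ g p (0, 1)) p.2 := by
  have h1 : HasDerivAt (fun y : ℝ => (p.1, y)) ((0 : ℝ), (1 : ℝ)) p.2 :=
    (hasDerivAt_const p.2 p.1).prodMk (hasDerivAt_id p.2)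
  exact h.hasFDerivAt.comp_hasDerivAt p.2 h1

section
variable {U : Set (ℝ × ℝ)} {f : ℝ × ℝ → ℝ}

/-- On an open set where `f` is `C^∞`, the slice `y ↦ f_x(p₁, y)` has derivative
`(D²f p) (0,1) (1,0)`. -/
lemma key_y (hU : IsOpen U) (hf : ContDiffOn ℝ (⊤ : ℕ∞) f U) {p : ℝ × ℝ} (hp : p ∈ U) :
    HasDerivAt (fun y => pdx f (p.1, y)) (fderiv ℝ (fderiv ℝ f) p (0, 1) (1, 0)) p.2 := by
  set g := fderiv ℝ f with hg
  have hgC : ContDiffOn ℝ (⊤ : ℕ∞) g U := hf.fderiv_of_isOpen hU (by exact_mod_cast le_top)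
  have hgAt : DifferentiableAt ℝ g p :=
    (hgC.differentiableOn (by simp)).differentiableAt (hU.mem_nhds hp)
  set gx : ℝ × ℝ → ℝ := fun q => g q (1, 0) with hgx
  have hgxAt : DifferentiableAt ℝ gx p := hgAt.clm_apply (differentiableAt_const _)
  have hev : (fun y => pdx f (p.1, y)) =ᶠ[𝓝 p.2] fun y => gx (p.1, y) := by
    have hev0 : pdx f =ᶠ[𝓝 p] gx := by
      filter_upwards [hU.mem_nhds hp] with q hq
      exact (hasDerivAt_slice_x ((hf.differentiableOn (by simp)).differentiableAt
        (hU.mem_nhds hq))).deriv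
    exact hev0.comp_tendsto ((continuous_const.prodMk continuous_id).tendsto p.2)
  have h1 : HasDerivAt (fun y => gx (p.1, y)) (fderiv ℝ gx p (0, 1)) p.2 :=
    hasDerivAt_slice_y hgxAt
  have h2 : HasDerivAt (fun y => pdx f (p.1, y)) (fderiv ℝ gx p (0, 1)) p.2 :=
    h1.congr_of_eventuallyEq hev
  have h3 : fderiv ℝ gx p (0, 1) = fderiv ℝ g p (0, 1) (1, 0) := by
    have := ((ContinuousLinearMap.apply ℝ ℝ ((1 : ℝ), (0 : ℝ))).hasFDerivAt.comp p
      hgAt.hasFDerivAt).fderiv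
    rw [show gx = (ContinuousLinearMap.apply ℝ ℝ ((1 : ℝ), (0 : ℝ))) ∘ g from rfl, this]
    rfl
  rwa [h3] at h2

lemma key_x (hU : IsOpen U) (hf : ContDiffOn ℝ (⊤ : ℕ∞) f U) {p : ℝ × ℝ} (hp : p ∈ U) :
    HasDerivAt (fun x => pdy f (x, p.2)) (fderiv ℝ (fderiv ℝ f) p (1, 0) (0, 1)) p.1 := by
  set g := fderiv ℝ f with hg
  have hgC : ContDiffOn ℝ (⊤ : ℕ∞) g U := hf.fderiv_of_isOpen hU (by exact_mod_cast le_top)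
  have hgAt : DifferentiableAt ℝ g p :=
    (hgC.differentiableOn (by simp)).differentiableAt (hU.mem_nhds hp)
  set gy : ℝ × ℝ → ℝ := fun q => g q (0, 1) with hgy
  have hgyAt : DifferentiableAt ℝ gy p := hgAt.clm_apply (differentiableAt_const _)
  have hev : (fun x => pdy f (x, p.2)) =ᶠ[𝓝 p.1] fun x => gy (x, p.2) := by
    have hev0 : pdy f =ᶠ[𝓝 p] gy := by
      filter_upwards [hU.mem_nhds hp] with q hq
      exact (hasDerivAt_slice_y ((hf.differentiableOn (by simp)).differentiableAt
        (hU.mem_nhds hq))).deriv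
    exact hev0.comp_tendsto ((continuous_id.prodMk continuous_const).tendsto p.1)
  have h1 : HasDerivAt (fun x => gy (x, p.2)) (fderiv ℝ gy p (1, 0)) p.1 :=
    hasDerivAt_slice_x hgyAt
  have h2 : HasDerivAt (fun x => pdy f (x, p.2)) (fderiv ℝ gy p (1, 0)) p.1 :=
    h1.congr_of_eventuallyEq hev
  have h3 : fderiv ℝ gy p (1, 0) = fderiv ℝ g p (1, 0) (0, 1) := by
    have := ((ContinuousLinearMap.apply ℝ ℝ ((0 : ℝ), (1 : ℝ))).hasFDerivAt.comp p
      hgAt.hasFDerivAt).fderiv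
    rw [show gy = (ContinuousLinearMap.apply ℝ ℝ ((0 : ℝ), (1 : ℝ))) ∘ g from rfl, this]
    rfl
  rwa [h3] at h2

/-- Schwarz symmetry of second partials. -/
lemma schwarz (hU : IsOpen U) (hf : ContDiffOn ℝ (⊤ : ℕ∞) f U) {p : ℝ × ℝ}
    (hp : p ∈ U) : pdy (pdx f) p = pdx (pdy f) p := by
  have h1 : pdy (pdx f) p = fderiv ℝ (fderiv ℝ f) p (0, 1) (1, 0) :=
    (key_y hU hf hp).deriv
  have h2 : pdx (pdy f) p = fderiv ℝ (fderiv ℝ f) p (1, 0) (0, 1) :=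
    (key_x hU hf hp).deriv
  have hev : ∀ᶠ q in 𝓝 p, HasFDerivAt f (fderiv ℝ f q) q := by
    filter_upwards [hU.mem_nhds hp] with q hq
    exact ((hf.differentiableOn (by simp)).differentiableAt (hU.mem_nhds hq)).hasFDerivAt
  have hgC : ContDiffOn ℝ (⊤ : ℕ∞) (fderiv ℝ f) U :=
    hf.fderiv_of_isOpen hU (by exact_mod_cast le_top)
  have hgAt : DifferentiableAt ℝ (fderiv ℝ f) p :=
    (hgC.differentiableOn (by simp)).differentiableAt (hU.mem_nhds hp)
  have := second_derivative_symmetric_of_eventually hev hgAt.hasFDerivAt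
    ((0 : ℝ), (1 : ℝ)) ((1 : ℝ), (0 : ℝ))
  rw [h1, h2, this]

end

section
variable {f : ℝ × ℝ → ℝ}

/-- slice `x ↦ f_x(x, p₂)` has derivative `(D²f p)(1,0)(1,0)`. -/
lemma key_xx {U : Set (ℝ × ℝ)} (hU : IsOpen U) (hf : ContDiffOn ℝ (⊤ : ℕ∞) f U)
    {p : ℝ × ℝ} (hp : p ∈ U) :
    HasDerivAt (fun x => pdx f (x, p.2)) (fderiv ℝ (fderiv ℝ f) p (1, 0) (1, 0)) p.1 := by
  set g := fderiv ℝ f with hg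
  have hgC : ContDiffOn ℝ (⊤ : ℕ∞) g U := hf.fderiv_of_isOpen hU (by exact_mod_cast le_top)
  have hgAt : DifferentiableAt ℝ g p :=
    (hgC.differentiableOn (by simp)).differentiableAt (hU.mem_nhds hp)
  set gx : ℝ × ℝ → ℝ := fun q => g q (1, 0) with hgx
  have hgxAt : DifferentiableAt ℝ gx p := hgAt.clm_apply (differentiableAt_const _)
  have hev : (fun x => pdx f (x, p.2)) =ᶠ[𝓝 p.1] fun x => gx (x, p.2) := by
    have hev0 : pdx f =ᶠ[𝓝 p] gx := by
      filter_upwards [hU.mem_nhds hp] with q hq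
      exact (hasDerivAt_slice_x ((hf.differentiableOn (by simp)).differentiableAt
        (hU.mem_nhds hq))).deriv
    exact hev0.comp_tendsto ((continuous_id.prodMk continuous_const).tendsto p.1)
  have h1 : HasDerivAt (fun x => gx (x, p.2)) (fderiv ℝ gx p (1, 0)) p.1 :=
    hasDerivAt_slice_x hgxAt
  have h2 : HasDerivAt (fun x => pdx f (x, p.2)) (fderiv ℝ gx p (1, 0)) p.1 :=
    h1.congr_of_eventuallyEq hev
  have h3 : fderiv ℝ gx p (1, 0) = fderiv ℝ g p (1, 0) (1, 0) := by
    have := ((ContinuousLinearMap.apply ℝ ℝ ((1 : ℝ), (0 : ℝ))).hasFDerivAt.comp p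
      hgAt.hasFDerivAt).fderiv
    rw [show gx = (ContinuousLinearMap.apply ℝ ℝ ((1 : ℝ), (0 : ℝ))) ∘ g from rfl, this]
    rfl
  rwa [h3] at h2

lemma samuelson_aux
    (I J : Set ℝ) (hI : IsOpen I) (hJ : IsOpen J) (hJc : J.OrdConnected)
    (hf : ContDiffOn ℝ (⊤ : ℕ∞) f (I ×ˢ J))
    (hfx : ∀ p ∈ I ×ˢ J, pdx f p ≠ 0) (hfy : ∀ p ∈ I ×ˢ J, pdy f p ≠ 0)
    (σ₁ : ℝ × ℝ → ℝ) (hσ₁ : DifferentiableOn ℝ σ₁ (I ×ˢ J)) :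
    (∀ p ∈ I ×ˢ J, -(pdy f p)⁻¹ * pdy σ₁ p = Hf f p) ↔
      ∃ s₁ : ℝ → ℝ, DifferentiableOn ℝ s₁ I ∧
        ∀ p ∈ I ×ˢ J, σ₁ p = -Real.log |pdx f p| + s₁ p.1 := by
  have hU : IsOpen (I ×ˢ J) := hI.prod hJ
  have hkey : ∀ p ∈ I ×ˢ J, HasDerivAt (fun y => pdx f (p.1, y)) (pdy (pdx f) p) p.2 := by
    intro p hp
    have h := key_y hU hf hp
    have e : pdy (pdx f) p = fderiv ℝ (fderiv ℝ f) p (0, 1) (1, 0) := h.deriv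
    rw [show pdy (pdx f) p = _ from e]; exact h
  have hlog : ∀ p ∈ I ×ˢ J, HasDerivAt (fun y => Real.log |pdx f (p.1, y)|)
      ((pdx f p)⁻¹ * pdy (pdx f) p) p.2 := by
    intro p hp
    have h4 := (Real.hasDerivAt_log (hfx p hp)).comp p.2 (hkey p hp)
    simp only [Real.log_abs]
    exact h4
  have hσd : ∀ p ∈ I ×ˢ J, HasDerivAt (fun y => σ₁ (p.1, y)) (pdy σ₁ p) p.2 := by
    intro p hp
    have h := hasDerivAt_slice_y (hσ₁.differentiableAt (hU.mem_nhds hp))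
    rw [show pdy σ₁ p = _ from h.deriv]; exact h
  constructor
  · intro hyp
    rcases Set.eq_empty_or_nonempty J with hJe | ⟨b₀, hb₀⟩
    · exact ⟨fun _ => 0, (differentiable_const 0).differentiableOn,
        fun p hp => absurd hp.2 (by simp [hJe])⟩
    · refine ⟨fun x => σ₁ (x, b₀) + Real.log |pdx f (x, b₀)|, ?_, ?_⟩
      · intro a ha
        have hpU : ((a : ℝ), b₀) ∈ I ×ˢ J := ⟨ha, hb₀⟩
        have h1 : DifferentiableAt ℝ (fun x => σ₁ (x, b₀)) a :=
          (hσ₁.differentiableAt (hU.mem_nhds hpU)).comp a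
            (differentiableAt_id.prodMk (differentiableAt_const _))
        have h2 : DifferentiableAt ℝ (fun x => pdx f (x, b₀)) a :=
          (key_xx hU hf hpU).differentiableAt
        apply DifferentiableAt.differentiableWithinAt
        simp only [Real.log_abs]
        exact h1.add (h2.log (hfx _ hpU))
      · rintro ⟨a, b⟩ ⟨ha, hb⟩
        have hconst : σ₁ (a, b) + Real.log |pdx f (a, b)| =
            σ₁ (a, b₀) + Real.log |pdx f (a, b₀)| := by
          set φ : ℝ → ℝ := fun y => σ₁ (a, y) + Real.log |pdx f (a, y)| with hφ
          have hd : ∀ y ∈ J, HasDerivAt φ 0 y := by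
            intro y hy
            have hqU : ((a : ℝ), y) ∈ I ×ˢ J := ⟨ha, hy⟩
            have h1 := (hσd _ hqU).add (hlog _ hqU)
            have h0 : pdy σ₁ (a, y) + (pdx f (a, y))⁻¹ * pdy (pdx f) (a, y) = 0 := by
              have h := hyp _ hqU
              have hx0 := hfx _ hqU
              have hy0 := hfy _ hqU
              rw [Hf] at h
              field_simp at h
              have h2 : pdy σ₁ (a, y) * pdx f (a, y) = -pdy (pdx f) (a, y) := by
                apply mul_right_cancel₀ hy0
                linear_combination (-pdy f (a, y)) * h
              have h3 : pdy σ₁ (a, y) = -((pdx f (a, y))⁻¹ * pdy (pdx f) (a, y)) := by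
                field_simp
                linear_combination h2
              rw [h3]; ring
            rwa [h0] at h1
          have hdiff : DifferentiableOn ℝ φ J := fun y hy =>
            ((hd y hy).differentiableAt).differentiableWithinAt
          have hfz : ∀ y ∈ J, fderivWithin ℝ φ J y = 0 := by
            intro y hy
            have hz : HasFDerivAt φ (0 : ℝ →L[ℝ] ℝ) y := by
              have h := (hd y hy).hasFDerivAt
              convert h using 1 <;> ext <;> simp
            rw [fderivWithin_of_isOpen hJ hy, hz.fderiv]
          exact Convex.is_const_of_fderivWithin_eq_zero hJc.convex hdiff hfz hb hb₀
        show σ₁ (a, b) = -Real.log |pdx f (a, b)| + (σ₁ (a, b₀) + Real.log |pdx f (a, b₀)|)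
        linarith
  · rintro ⟨s₁, hs₁, hss⟩ p hp
    have hev : (fun y => σ₁ (p.1, y)) =ᶠ[𝓝 p.2]
        fun y => -Real.log |pdx f (p.1, y)| + s₁ p.1 := by
      have hm : ∀ᶠ y in 𝓝 p.2, ((p.1 : ℝ), y) ∈ I ×ˢ J :=
        ((continuous_const.prodMk continuous_id).tendsto p.2).eventually
          (hU.eventually_mem hp)
      filter_upwards [hm] with y hy using hss _ hy
    have hd : HasDerivAt (fun y => -Real.log |pdx f (p.1, y)| + s₁ p.1)
        (-((pdx f p)⁻¹ * pdy (pdx f) p)) p.2 := ((hlog p hp).neg).add_const _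
    have hder : pdy σ₁ p = -((pdx f p)⁻¹ * pdy (pdx f) p) :=
      (hd.congr_of_eventuallyEq hev).deriv
    rw [hder, Hf]
    have hx0 := hfx p hp
    have hy0 := hfy p hp
    field_simp

end

/-- General solutions of the first two Samuelson equations:
a differentiable `σ₁` satisfies `∂₂σ₁ = H` on `U` iff
`σ₁(x,y) = -log|f_x(x,y)| + s₁(x)` for some differentiable `s₁ : I → ℝ`;
symmetrically, `∂₁σ₂ = H` on `U` iff `σ₂(x,y) = -log|f_y(x,y)| + s₂(y)`
for some differentiable `s₂ : J → ℝ`. -/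
theorem samuelson_first_equations_solutions
    (I J : Set ℝ) (hI : IsOpen I) (hJ : IsOpen J)
    (hIc : I.OrdConnected) (hJc : J.OrdConnected)
    (f : ℝ × ℝ → ℝ) (hf : ContDiffOn ℝ (⊤ : ℕ∞) f (I ×ˢ J))
    (hfx : ∀ p ∈ I ×ˢ J, pdx f p ≠ 0) (hfy : ∀ p ∈ I ×ˢ J, pdy f p ≠ 0)
    (σ₁ σ₂ : ℝ × ℝ → ℝ)
    (hσ₁ : DifferentiableOn ℝ σ₁ (I ×ˢ J)) (hσ₂ : DifferentiableOn ℝ σ₂ (I ×ˢ J)) :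
    ((∀ p ∈ I ×ˢ J, -(pdy f p)⁻¹ * pdy σ₁ p = Hf f p) ↔
      ∃ s₁ : ℝ → ℝ, DifferentiableOn ℝ s₁ I ∧
        ∀ p ∈ I ×ˢ J, σ₁ p = -Real.log |pdx f p| + s₁ p.1) ∧
    ((∀ p ∈ I ×ˢ J, -(pdx f p)⁻¹ * pdx σ₂ p = Hf f p) ↔
      ∃ s₂ : ℝ → ℝ, DifferentiableOn ℝ s₂ J ∧
        ∀ p ∈ I ×ˢ J, σ₂ p = -Real.log |pdy f p| + s₂ p.2) := by
  have hU : IsOpen (I ×ˢ J) := hI.prod hJ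
  refine ⟨samuelson_aux I J hI hJ hJc hf hfx hfy σ₁ hσ₁, ?_⟩
  -- the swapped data
  have hswC : ContDiff ℝ (⊤ : ℕ∞) (Prod.swap : ℝ × ℝ → ℝ × ℝ) := contDiff_snd.prodMk contDiff_fst
  have hmaps : Set.MapsTo (Prod.swap : ℝ × ℝ → ℝ × ℝ) (J ×ˢ I) (I ×ˢ J) :=
    fun q hq => ⟨hq.2, hq.1⟩
  have hf' : ContDiffOn ℝ (⊤ : ℕ∞) (f ∘ Prod.swap) (J ×ˢ I) :=
    hf.comp hswC.contDiffOn hmaps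
  have hfx' : ∀ q ∈ J ×ˢ I, pdx (f ∘ Prod.swap) q ≠ 0 :=
    fun q hq => hfy q.swap ⟨hq.2, hq.1⟩
  have hfy' : ∀ q ∈ J ×ˢ I, pdy (f ∘ Prod.swap) q ≠ 0 :=
    fun q hq => hfx q.swap ⟨hq.2, hq.1⟩
  have hσ' : DifferentiableOn ℝ (σ₂ ∘ Prod.swap) (J ×ˢ I) :=
    hσ₂.comp (differentiable_snd.prodMk differentiable_fst).differentiableOn hmaps
  have hHf : ∀ p ∈ I ×ˢ J, Hf (f ∘ Prod.swap) p.swap = Hf f p := by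
    intro p hp
    show pdx (pdy f) p / (pdy f p * pdx f p) = pdy (pdx f) p / (pdx f p * pdy f p)
    rw [← schwarz hU hf hp, mul_comm]
  have main2 := samuelson_aux J I hJ hI hIc hf' hfx' hfy' (σ₂ ∘ Prod.swap) hσ'
  constructor
  · intro hyp
    obtain ⟨s₂, hs₂, hprop⟩ := main2.mp (by
      intro q hq
      have hp : q.swap ∈ I ×ˢ J := ⟨hq.2, hq.1⟩
      have h := hyp q.swap hp
      rw [← hHf q.swap hp] at h
      exact h)
    exact ⟨s₂, hs₂, fun p hp => hprop p.swap ⟨hp.2, hp.1⟩⟩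
  · rintro ⟨s₂, hs₂, hprop⟩ p hp
    have h := main2.mpr ⟨s₂, hs₂, fun q hq => hprop q.swap ⟨hq.2, hq.1⟩⟩ p.swap ⟨hp.2, hp.1⟩
    rw [hHf p hp] at h
    exact h
end

section
/- Let b, B : U → ℝ be smooth and suppose Δ = b_x b_y − b·b_{xy} vanishes nowhere on U. If s₁ : I → ℝ and s₂ : J → ℝ are twice differentiable and satisfy b(x,y)·s₁′(x) + s₂′(y) = B(x,y) for all (x,y) ∈ U, then at every (x,y) ∈ U: s₁′(x) = (b_y B_x − b B_{xy})/Δ and s₁″(x) = (b_x B_{xy} − b_{xy} B_x)/Δ. Consequently the function (b_y B_x − b B_{xy})/Δ has vanishing partial derivative with respect to y on U (condition J₁ = 0), and its partial derivative with respect to x equals (b_x B_{xy} − b_{xy} B_x)/Δ on U (condition J₂ = 0). -/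
open Set

open Filter Topology

/-- On an open set where `g` is smooth, `pdx g` is the directional `fderiv`. -/
lemma pdx_eq_fderiv_s10 {g : ℝ × ℝ → ℝ} {U : Set (ℝ × ℝ)} (hU : IsOpen U)
    (hg : ContDiffOn ℝ (⊤ : ℕ∞) g U) {x y : ℝ} (hp : (x, y) ∈ U) :
    pdx g (x, y) = fderiv ℝ g (x, y) (1, 0) := by
  have hd : DifferentiableAt ℝ g (x, y) :=
    (hg.differentiableOn (by simp)).differentiableAt (hU.mem_nhds hp)
  have h1 : HasDerivAt (fun t : ℝ => (t, y)) ((1 : ℝ), (0 : ℝ)) x :=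
    (hasDerivAt_id x).prodMk (hasDerivAt_const x y)
  exact (hd.hasFDerivAt.comp_hasDerivAt x h1).deriv

lemma fderiv_apply_diff {g : ℝ × ℝ → ℝ} {U : Set (ℝ × ℝ)} (hU : IsOpen U)
    (hg : ContDiffOn ℝ (⊤ : ℕ∞) g U) {p : ℝ × ℝ} (hp : p ∈ U) :
    DifferentiableAt ℝ (fun q => fderiv ℝ g q ((1 : ℝ), (0 : ℝ))) p := by
  have h1 : ContDiffOn ℝ (⊤ : ℕ∞) (fderiv ℝ g) U := hg.fderiv_of_isOpen hU (by exact_mod_cast le_top)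
  have hd : DifferentiableAt ℝ (fderiv ℝ g) p :=
    (h1.differentiableOn (by simp)).differentiableAt (hU.mem_nhds hp)
  exact hd.clm_apply (differentiableAt_const _)

/-- Cramer's rule for the equation `b·s₁'(x) + s₂'(y) = B(x,y)`:
if `Δ = b_x b_y - b b_{xy}` vanishes nowhere on `U` and twice differentiable
`s₁, s₂` solve the equation on `U`, then `s₁' = (b_y B_x - b B_{xy})/Δ` and
`s₁'' = (b_x B_{xy} - b_{xy} B_x)/Δ` on `U`; consequently
`(b_y B_x - b B_{xy})/Δ` has vanishing `y`-derivative on `U` (condition `J₁ = 0`)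
and its `x`-derivative equals `(b_x B_{xy} - b_{xy} B_x)/Δ` (condition `J₂ = 0`). -/
theorem samuelson_cramer_conditions
    (I J : Set ℝ) (hI : IsOpen I) (hJ : IsOpen J)
    (hIc : I.OrdConnected) (hJc : J.OrdConnected)
    (b B : ℝ × ℝ → ℝ)
    (hb : ContDiffOn ℝ (⊤ : ℕ∞) b (I ×ˢ J)) (hB : ContDiffOn ℝ (⊤ : ℕ∞) B (I ×ˢ J))
    (hΔ : ∀ p ∈ I ×ˢ J, pdx b p * pdy b p - b p * pdy (pdx b) p ≠ 0)
    (s₁ s₂ : ℝ → ℝ)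
    (hs₁ : DifferentiableOn ℝ s₁ I) (hs₁' : DifferentiableOn ℝ (deriv s₁) I)
    (hs₂ : DifferentiableOn ℝ s₂ J) (hs₂' : DifferentiableOn ℝ (deriv s₂) J)
    (heq : ∀ p ∈ I ×ˢ J, b p * deriv s₁ p.1 + deriv s₂ p.2 = B p) :
    ∀ p ∈ I ×ˢ J,
      deriv s₁ p.1 = (pdy b p * pdx B p - b p * pdy (pdx B) p)
          / (pdx b p * pdy b p - b p * pdy (pdx b) p) ∧
      deriv (deriv s₁) p.1 = (pdx b p * pdy (pdx B) p - pdy (pdx b) p * pdx B p)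
          / (pdx b p * pdy b p - b p * pdy (pdx b) p) ∧
      pdy (fun q => (pdy b q * pdx B q - b q * pdy (pdx B) q)
          / (pdx b q * pdy b q - b q * pdy (pdx b) q)) p = 0 ∧
      pdx (fun q => (pdy b q * pdx B q - b q * pdy (pdx B) q)
          / (pdx b q * pdy b q - b q * pdy (pdx b) q)) p
        = (pdx b p * pdy (pdx B) p - pdy (pdx b) p * pdx B p)
          / (pdx b p * pdy b p - b p * pdy (pdx b) p) := by
  have hU : IsOpen (I ×ˢ J) := hI.prod hJ
  -- Step 1: the first differentiated equation (s'_x) holds on U.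
  have E1 : ∀ p ∈ I ×ˢ J,
      pdx b p * deriv s₁ p.1 + b p * deriv (deriv s₁) p.1 = pdx B p := by
    rintro ⟨x, y⟩ ⟨hx, hy⟩
    have hDb : DifferentiableAt ℝ (fun t => b (t, y)) x := by
      have hd : DifferentiableAt ℝ b (x, y) :=
        (hb.differentiableOn (by simp)).differentiableAt (hU.mem_nhds ⟨hx, hy⟩)
      exact hd.comp x (differentiableAt_id.prodMk (differentiableAt_const _))
    have hDs : DifferentiableAt ℝ (deriv s₁) x :=
      hs₁'.differentiableAt (hI.mem_nhds hx)
    have h : HasDerivAt (fun t => b (t, y) * deriv s₁ t + deriv s₂ y)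
        (pdx b (x, y) * deriv s₁ x + b (x, y) * deriv (deriv s₁) x) x := by
      have := (hDb.hasDerivAt.mul hDs.hasDerivAt).add_const (deriv s₂ y)
      exact this
    have hev : (fun t => B (t, y)) =ᶠ[nhds x] (fun t => b (t, y) * deriv s₁ t + deriv s₂ y) := by
      filter_upwards [hI.mem_nhds hx] with t ht
      exact (heq (t, y) ⟨ht, hy⟩).symm
    exact ((h.congr_of_eventuallyEq hev).deriv).symm
  -- Step 2: Cramer's rule gives the values of `s₁'` and `s₁''`.
  have key : ∀ p ∈ I ×ˢ J,
      deriv s₁ p.1 = (pdy b p * pdx B p - b p * pdy (pdx B) p)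
          / (pdx b p * pdy b p - b p * pdy (pdx b) p) ∧
      deriv (deriv s₁) p.1 = (pdx b p * pdy (pdx B) p - pdy (pdx b) p * pdx B p)
          / (pdx b p * pdy b p - b p * pdy (pdx b) p) := by
    rintro ⟨x, y⟩ ⟨hx, hy⟩
    -- differentiate E1 with respect to y
    have hD1 : DifferentiableAt ℝ (fun y' => pdx b (x, y')) y := by
      have hf1 : DifferentiableAt ℝ (fun y' => fderiv ℝ b (x, y') ((1 : ℝ), (0 : ℝ))) y :=
        (fderiv_apply_diff hU hb ⟨hx, hy⟩).comp y
          ((differentiableAt_const x).prodMk differentiableAt_id)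
      refine hf1.congr_of_eventuallyEq ?_
      filter_upwards [hJ.mem_nhds hy] with y' hy'
      exact pdx_eq_fderiv_s10 hU hb ⟨hx, hy'⟩
    have hD2 : DifferentiableAt ℝ (fun y' => b (x, y')) y := by
      have hd : DifferentiableAt ℝ b (x, y) :=
        (hb.differentiableOn (by simp)).differentiableAt (hU.mem_nhds ⟨hx, hy⟩)
      exact hd.comp y ((differentiableAt_const x).prodMk differentiableAt_id)
    have h : HasDerivAt (fun y' => pdx b (x, y') * deriv s₁ x + b (x, y') * deriv (deriv s₁) x)
        (pdy (pdx b) (x, y) * deriv s₁ x + pdy b (x, y) * deriv (deriv s₁) x) y :=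
      (hD1.hasDerivAt.mul_const _).add (hD2.hasDerivAt.mul_const _)
    have hev : (fun y' => pdx B (x, y')) =ᶠ[nhds y]
        (fun y' => pdx b (x, y') * deriv s₁ x + b (x, y') * deriv (deriv s₁) x) := by
      filter_upwards [hJ.mem_nhds hy] with y' hy'
      exact (E1 (x, y') ⟨hx, hy'⟩).symm
    have E2 : pdy (pdx B) (x, y) =
        pdy (pdx b) (x, y) * deriv s₁ x + pdy b (x, y) * deriv (deriv s₁) x :=
      (h.congr_of_eventuallyEq hev).deriv
    have e1 := E1 (x, y) ⟨hx, hy⟩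
    have hΔ' := hΔ (x, y) ⟨hx, hy⟩
    constructor
    · rw [eq_div_iff hΔ']
      simp only at e1 E2 ⊢
      linear_combination pdy b (x, y) * e1 + b (x, y) * E2
    · rw [eq_div_iff hΔ']
      simp only at e1 E2 ⊢
      linear_combination (-pdy (pdx b) (x, y)) * e1 - pdx b (x, y) * E2
  -- Conclusion
  rintro ⟨x, y⟩ ⟨hx, hy⟩
  refine ⟨(key (x, y) ⟨hx, hy⟩).1, (key (x, y) ⟨hx, hy⟩).2, ?_, ?_⟩
  · show deriv (fun y' => (pdy b (x, y') * pdx B (x, y') - b (x, y') * pdy (pdx B) (x, y'))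
        / (pdx b (x, y') * pdy b (x, y') - b (x, y') * pdy (pdx b) (x, y'))) y = 0
    have hev : (fun y' => (pdy b (x, y') * pdx B (x, y') - b (x, y') * pdy (pdx B) (x, y'))
        / (pdx b (x, y') * pdy b (x, y') - b (x, y') * pdy (pdx b) (x, y'))) =ᶠ[nhds y]
        (fun _ => deriv s₁ x) := by
      filter_upwards [hJ.mem_nhds hy] with y' hy'
      exact ((key (x, y') ⟨hx, hy'⟩).1).symm
    rw [hev.deriv_eq, deriv_const]
  · show deriv (fun t => (pdy b (t, y) * pdx B (t, y) - b (t, y) * pdy (pdx B) (t, y))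
        / (pdx b (t, y) * pdy b (t, y) - b (t, y) * pdy (pdx b) (t, y))) x = _
    have hev : (fun t => (pdy b (t, y) * pdx B (t, y) - b (t, y) * pdy (pdx B) (t, y))
        / (pdx b (t, y) * pdy b (t, y) - b (t, y) * pdy (pdx b) (t, y))) =ᶠ[nhds x]
        (deriv s₁) := by
      filter_upwards [hI.mem_nhds hx] with t ht
      exact ((key (t, y) ⟨ht, hy⟩).1).symm
    rw [hev.deriv_eq]
    exact (key (x, y) ⟨hx, hy⟩).2
end

section
/- Let b₁ : I → ℝ and b₂ : J → ℝ be smooth and positive, set b(x,y) = b₁(x)·b₂(y), and let B : U → ℝ be smooth. Then there exist differentiable s₁ : I → ℝ and s₂ : J → ℝ with b(x,y)·s₁′(x) + s₂′(y) = B(x,y) on U if and only if ∂²(B/b₂)/∂x∂y = 0 on U. Moreover, when solutions exist, the set of solution pairs (s₁, s₂) is a 3-dimensional affine subspace: the differences of any two solutions form the 3-parameter family s₁ − s̃₁ = c·∫ b₁⁻¹ dx + c₁, s₂ − s̃₂ = −c·∫ b₂ dy + c₂ with c, c₁, c₂ ∈ ℝ. -/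
open Set

open MeasureTheory intervalIntegral

/-- Antiderivative of a continuous function on an open interval. -/
lemma exists_antideriv' (I : Set ℝ) (hI : IsOpen I) (hIc : I.OrdConnected)
    (f : ℝ → ℝ) (hf : ContinuousOn f I) (x₀ : ℝ) (hx₀ : x₀ ∈ I) :
    ∃ s : ℝ → ℝ, DifferentiableOn ℝ s I ∧ ∀ x ∈ I, deriv s x = f x := by
  refine ⟨fun x => ∫ t in x₀..x, f t, ?_, ?_⟩ <;>
  · intro x hx
    have hint : IntervalIntegrable f volume x₀ x :=
      (hf.mono (hIc.uIcc_subset hx₀ hx)).intervalIntegrable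
    have hd : HasDerivAt (fun u => ∫ t in x₀..u, f t) (f x) x :=
      integral_hasDerivAt_right hint (hf.stronglyMeasurableAtFilter hI x hx)
        (hf.continuousAt (hI.mem_nhds hx))
    first
    | exact hd.differentiableAt.differentiableWithinAt
    | exact hd.deriv

/-- A function with zero derivative on an open interval is constant. -/
lemma const_of_hasDerivAt_zero' (I : Set ℝ) (hI : IsOpen I) (hIc : I.OrdConnected)
    (f : ℝ → ℝ) (hf : ∀ x ∈ I, HasDerivAt f 0 x) (x₀ : ℝ) (hx₀ : x₀ ∈ I) :
    ∀ x ∈ I, f x = f x₀ := by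
  intro x hx
  refine hIc.convex.is_const_of_fderivWithin_eq_zero
    (fun z hz => ((hf z hz).differentiableAt).differentiableWithinAt) ?_ hx hx₀
  intro z hz
  have h : HasFDerivAt f ((1 : ℝ →L[ℝ] ℝ).smulRight (0:ℝ)) z := (hf z hz).hasFDerivAt
  rw [(h.hasFDerivWithinAt).fderivWithin (hI.uniqueDiffWithinAt hz)]
  ext v
  simp

/-- The singular case `b(x,y) = b₁(x)·b₂(y)` of the equation
`b·s₁'(x) + s₂'(y) = B(x,y)`: differentiable solutions `s₁, s₂` exist on `U` iff
`∂²(B/b₂)/∂x∂y = 0` on `U`; moreover, when solutions exist, the differences of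
any two solution pairs form the 3-parameter family
`s₁ - s̃₁ = c·∫ b₁⁻¹ dx + c₁`, `s₂ - s̃₂ = -c·∫ b₂ dy + c₂` (recorded here by
`(s₁ - s̃₁)' = c·b₁⁻¹` on `I` and `(s₂ - s̃₂)' = -c·b₂` on `J`). -/
theorem samuelson_singular_s_equation
    (I J : Set ℝ) (hI : IsOpen I) (hJ : IsOpen J)
    (hIc : I.OrdConnected) (hJc : J.OrdConnected)
    (hne : (I ×ˢ J : Set (ℝ × ℝ)).Nonempty)
    (b₁ b₂ : ℝ → ℝ)
    (hb₁ : ContDiffOn ℝ (⊤ : ℕ∞) b₁ I) (hb₂ : ContDiffOn ℝ (⊤ : ℕ∞) b₂ J)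
    (hb₁pos : ∀ x ∈ I, 0 < b₁ x) (hb₂pos : ∀ y ∈ J, 0 < b₂ y)
    (b : ℝ × ℝ → ℝ) (hb : ∀ p : ℝ × ℝ, b p = b₁ p.1 * b₂ p.2)
    (B : ℝ × ℝ → ℝ) (hB : ContDiffOn ℝ (⊤ : ℕ∞) B (I ×ˢ J)) :
    ((∃ s₁ s₂ : ℝ → ℝ, DifferentiableOn ℝ s₁ I ∧ DifferentiableOn ℝ s₂ J ∧
        ∀ p ∈ I ×ˢ J, b p * deriv s₁ p.1 + deriv s₂ p.2 = B p) ↔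
      (∀ p ∈ I ×ˢ J, pdy (pdx (fun q => B q / b₂ q.2)) p = 0)) ∧
    (∀ s₁ s₂ t₁ t₂ : ℝ → ℝ,
      DifferentiableOn ℝ s₁ I → DifferentiableOn ℝ s₂ J →
      DifferentiableOn ℝ t₁ I → DifferentiableOn ℝ t₂ J →
      (∀ p ∈ I ×ˢ J, b p * deriv s₁ p.1 + deriv s₂ p.2 = B p) →
      (∀ p ∈ I ×ˢ J, b p * deriv t₁ p.1 + deriv t₂ p.2 = B p) →
      ∃ c : ℝ,
        (∀ x ∈ I, deriv s₁ x - deriv t₁ x = c * (b₁ x)⁻¹) ∧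
        (∀ y ∈ J, deriv s₂ y - deriv t₂ y = -c * b₂ y)) := by
  have hU : IsOpen (I ×ˢ J) := hI.prod hJ
  constructor
  · constructor
    · -- forward: solutions exist → mixed partial vanishes
      rintro ⟨s₁, s₂, hs₁, hs₂, heq⟩ p hp
      obtain ⟨hp1, hp2⟩ := hp
      have key : ∀ y ∈ J, pdx (fun q => B q / b₂ q.2) (p.1, y)
          = deriv (fun x => b₁ x * deriv s₁ x) p.1 := by
        intro y hy
        have hev : (fun t => B (t, y) / b₂ y) =ᶠ[nhds p.1]
            (fun t => b₁ t * deriv s₁ t + deriv s₂ y / b₂ y) := by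
          filter_upwards [hI.mem_nhds hp1] with t ht
          have h := heq (t, y) ⟨ht, hy⟩
          rw [hb] at h
          have hb2 : b₂ y ≠ 0 := (hb₂pos y hy).ne'
          field_simp
          linarith [h]
        show deriv (fun x => B (x, y) / b₂ y) p.1 = _
        rw [hev.deriv_eq, deriv_add_const]
      have hev2 : (fun y => pdx (fun q => B q / b₂ q.2) (p.1, y)) =ᶠ[nhds p.2]
          (fun _ => deriv (fun x => b₁ x * deriv s₁ x) p.1) := by
        filter_upwards [hJ.mem_nhds hp2] with y hy using key y hy
      show deriv (fun y => pdx (fun q => B q / b₂ q.2) (p.1, y)) p.2 = 0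
      rw [hev2.deriv_eq, deriv_const]
    · -- backward: mixed partial vanishes → solutions exist
      intro hmix
      obtain ⟨p₀, hp₀⟩ := hne
      obtain ⟨hx₀, hy₀⟩ := hp₀
      set x₀ := p₀.1 with hx₀def
      set y₀ := p₀.2 with hy₀def
      set G : ℝ × ℝ → ℝ := fun q => B q / b₂ q.2 with hG
      have hGc : ContDiffOn ℝ (⊤ : ℕ∞) G (I ×ˢ J) := by
        apply hB.div
        · exact hb₂.comp contDiff_snd.contDiffOn (fun p hp => hp.2)
        · exact fun p hp => (hb₂pos p.2 hp.2).ne'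
      have hGd : DifferentiableOn ℝ G (I ×ˢ J) := hGc.differentiableOn (by simp)
      have hFc : ContDiffOn ℝ (⊤ : ℕ∞) (fderiv ℝ G) (I ×ˢ J) :=
        ((contDiffOn_infty_iff_fderiv_of_isOpen hU).1 hGc).2
      have hFA : ContDiffOn ℝ (⊤ : ℕ∞) (fun p => fderiv ℝ G p (1, 0)) (I ×ˢ J) :=
        hFc.clm_apply contDiffOn_const
      have hpdxG : ∀ x ∈ I, ∀ y ∈ J,
          HasDerivAt (fun t => G (t, y)) (fderiv ℝ G (x, y) (1, 0)) x := by
        intro x hx y hy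
        have h1 : HasFDerivAt G (fderiv ℝ G (x, y)) (x, y) :=
          (hGd.differentiableAt (hU.mem_nhds ⟨hx, hy⟩)).hasFDerivAt
        have h2 : HasDerivAt (fun t : ℝ => (t, y)) ((1:ℝ), (0:ℝ)) x :=
          (hasDerivAt_id x).prodMk (hasDerivAt_const x y)
        exact h1.comp_hasDerivAt x h2
      -- ∂G/∂x is independent of y
      have hconst1 : ∀ x ∈ I, ∀ y ∈ J,
          fderiv ℝ G (x, y) (1, 0) = fderiv ℝ G (x, y₀) (1, 0) := by
        intro x hx
        refine const_of_hasDerivAt_zero' J hJ hJc (fun y => fderiv ℝ G (x, y) (1, 0)) ?_ y₀ hy₀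
        intro y hy
        have hdiff : DifferentiableAt ℝ (fun y => fderiv ℝ G (x, y) (1, 0)) y :=
          ((hFA.differentiableOn (by simp)).differentiableAt (hU.mem_nhds ⟨hx, hy⟩)).comp y
            ((differentiableAt_const x).prodMk differentiableAt_id)
        have hev : (fun y' => fderiv ℝ G (x, y') (1, 0)) =ᶠ[nhds y]
            (fun y' => pdx G (x, y')) := by
          filter_upwards [hJ.mem_nhds hy] with y' hy'
          exact ((hpdxG x hx y' hy').deriv).symm
        have hder : deriv (fun y' => fderiv ℝ G (x, y') (1, 0)) y = 0 := by
          rw [hev.deriv_eq]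
          exact hmix (x, y) ⟨hx, hy⟩
        have := hdiff.hasDerivAt
        rwa [hder] at this
      -- hence G decomposes additively
      have hdec : ∀ x ∈ I, ∀ y ∈ J,
          G (x, y) - G (x, y₀) = G (x₀, y) - G (x₀, y₀) := by
        intro x hx y hy
        have hD : ∀ x' ∈ I, HasDerivAt (fun t => G (t, y) - G (t, y₀)) 0 x' := by
          intro x' hx'
          have h1 := hpdxG x' hx' y hy
          have h2 := hpdxG x' hx' y₀ hy₀
          have h3 := h1.sub h2
          rwa [hconst1 x' hx' y hy, sub_self] at h3
        exact const_of_hasDerivAt_zero' I hI hIc _ hD x₀ hx₀ x hx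
      -- construct the antiderivatives
      have hGy₀c : ContinuousOn (fun x => G (x, y₀)) I :=
        hGc.continuousOn.comp (Continuous.continuousOn (by fun_prop))
          (fun x hx => ⟨hx, hy₀⟩)
      have hGx₀c : ContinuousOn (fun y => G (x₀, y)) J :=
        hGc.continuousOn.comp (Continuous.continuousOn (by fun_prop))
          (fun y hy => ⟨hx₀, hy⟩)
      have hf₁c : ContinuousOn (fun x => (G (x, y₀) - G (x₀, y₀)) / b₁ x) I :=
        (hGy₀c.sub continuousOn_const).div hb₁.continuousOn
          (fun x hx => (hb₁pos x hx).ne')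
      have hf₂c : ContinuousOn (fun y => b₂ y * G (x₀, y)) J :=
        hb₂.continuousOn.mul hGx₀c
      obtain ⟨s₁, hs₁d, hs₁'⟩ := exists_antideriv' I hI hIc _ hf₁c x₀ hx₀
      obtain ⟨s₂, hs₂d, hs₂'⟩ := exists_antideriv' J hJ hJc _ hf₂c y₀ hy₀
      refine ⟨s₁, s₂, hs₁d, hs₂d, ?_⟩
      rintro ⟨x, y⟩ ⟨hx, hy⟩
      rw [hb, hs₁' x hx, hs₂' y hy]
      have h1 : b₁ x ≠ 0 := (hb₁pos x hx).ne'
      have h2 : b₂ y ≠ 0 := (hb₂pos y hy).ne'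
      have hd := hdec x hx y hy
      have hb20 : b₂ y₀ ≠ 0 := (hb₂pos y₀ hy₀).ne'
      simp only [hG] at hd ⊢
      have key : b₂ y * ((B (x, y₀) / b₂ y₀ - B (x₀, y₀) / b₂ y₀) + B (x₀, y) / b₂ y)
          = B (x, y) := by
        have hsum : (B (x, y₀) / b₂ y₀ - B (x₀, y₀) / b₂ y₀) + B (x₀, y) / b₂ y
            = B (x, y) / b₂ y := by linarith [hd]
        rw [hsum, mul_comm, div_mul_cancel₀ _ h2]
      have e1 : b₁ x * ((B (x, y₀) / b₂ y₀ - B (x₀, y₀) / b₂ y₀) / b₁ x)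
          = B (x, y₀) / b₂ y₀ - B (x₀, y₀) / b₂ y₀ := by field_simp
      linear_combination b₂ y * e1 + key
  · -- uniqueness of derivatives up to the 3-parameter family
    intro s₁ s₂ t₁ t₂ _ _ _ _ hs ht
    obtain ⟨p₀, hp₀⟩ := hne
    obtain ⟨hx₀, hy₀⟩ := hp₀
    set x₀ := p₀.1
    set y₀ := p₀.2
    set c : ℝ := (deriv t₂ y₀ - deriv s₂ y₀) / b₂ y₀ with hc
    have hb2 : b₂ y₀ ≠ 0 := (hb₂pos y₀ hy₀).ne'
    have hkey : ∀ x ∈ I, b₁ x * (deriv s₁ x - deriv t₁ x) = c := by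
      intro x hx
      have h1 := hs (x, y₀) ⟨hx, hy₀⟩
      have h2 := ht (x, y₀) ⟨hx, hy₀⟩
      rw [hb] at h1 h2
      rw [hc]
      field_simp
      linear_combination h1 - h2
    refine ⟨c, fun x hx => ?_, fun y hy => ?_⟩
    · have h := hkey x hx
      have hb1 : b₁ x ≠ 0 := (hb₁pos x hx).ne'
      field_simp
      linear_combination h
    · have h1 := hs (x₀, y) ⟨hx₀, hy⟩
      have h2 := ht (x₀, y) ⟨hx₀, hy⟩
      rw [hb] at h1 h2
      have hc₀ := hkey x₀ hx₀
      linear_combination h1 - h2 - b₂ y * hc₀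
end
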